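/- Let E_κ(z) = exp(z) + κ with Re(κ) ≥ 2, and let z ∈ ℂ with Re(z) ≤ Re(κ) + 1. Then for all k ≥ 1, |E_κ^k(z)| ≤ F^k(|κ| + 2), where F(t) = e^t - 1. -/

import Mathlib

/-- Model function for exponential growth: F(t) = e^t - 1. -/
noncomputable def F (t : ℝ) : ℝ := Real.exp t - 1

/-- The exponential map E_κ(z) = exp(z) + κ. -/
noncomputable def E (κ : ℂ) (z : ℂ) : ℂ := Complex.exp z + κ

lemma F_self_le (t : ℝ) (ht : 0 ≤ t) : t ≤ F t := by
  have := Real.add_one_le_exp t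
  simp only [F]; nlinarith [Real.exp_pos t]

lemma iter_ge (c : ℝ) (hc : 0 ≤ c) : ∀ k, c ≤ F^[k] c := by
  intro k
  induction k with
  | zero => simp
  | succ n ih =>
    rw [Function.iterate_succ_apply']
    exact le_trans ih (F_self_le _ (le_trans hc ih))

lemma base_ineq (c : ℝ) (hc : 4 ≤ c) : Real.exp (c-1) + 2*c - 1 ≤ Real.exp c := by
  have h1 : Real.exp c = Real.exp (c-1) * Real.exp 1 := by
    rw [← Real.exp_add]; ring_nf
  have h2 : Real.exp (c-1) = Real.exp 1 * Real.exp (c-2) := by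
    rw [← Real.exp_add]; ring_nf
  have h3 : c - 1 ≤ Real.exp (c-2) := by
    have := Real.add_one_le_exp (c-2); linarith
  have h4 : (2.7 : ℝ) < Real.exp 1 := by
    have := Real.exp_one_gt_d9; norm_num at this ⊢; linarith
  nlinarith [Real.exp_pos (c-2), Real.exp_pos (c-1)]

lemma step_ineq (c A : ℝ) (hc : 4 ≤ c) (hA : c ≤ A) :
    Real.exp (A - c) + 2*c - 1 ≤ Real.exp A := by
  have h1 : Real.exp A = Real.exp (A - c) * Real.exp c := by
    rw [← Real.exp_add]; ring_nf
  have hu : 1 ≤ Real.exp (A - c) := Real.one_le_exp (by linarith)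
  have h2 : Real.exp c = Real.exp (c/2) * Real.exp (c/2) := by
    rw [← Real.exp_add]; ring_nf
  have h3 : c/2 + 1 ≤ Real.exp (c/2) := Real.add_one_le_exp (c/2)
  have h4 : 2*c ≤ Real.exp c := by nlinarith
  nlinarith [Real.exp_pos (A - c)]

/-- If Re(κ) ≥ 2 and Re(z) ≤ Re(κ) + 1, then for all k ≥ 1,
    |E_κ^k(z)| ≤ F^k(|κ| + 2). -/
theorem abs_iterate_bound (κ z : ℂ) (hκ : 2 ≤ κ.re) (hz : z.re ≤ κ.re + 1) :
    ∀ k : ℕ, 1 ≤ k → ‖(E κ)^[k] z‖ ≤ F^[k] (‖κ‖ + 2) := by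
  set c : ℝ := ‖κ‖ + 2 with hcdef
  have hre : κ.re ≤ ‖κ‖ := Complex.re_le_norm κ
  have hc4 : 4 ≤ c := by simp only [hcdef]; linarith
  have key : ∀ k, 1 ≤ k → ‖(E κ)^[k] z‖ ≤ F^[k] c - c := by
    intro k hk
    induction k, hk using Nat.le_induction with
    | base =>
      rw [Function.iterate_one, Function.iterate_one]
      have h1 : ‖E κ z‖ ≤ Real.exp z.re + ‖κ‖ := by
        calc ‖E κ z‖ ≤ ‖Complex.exp z‖ + ‖κ‖ :=
              norm_add_le _ _
          _ = Real.exp z.re + ‖κ‖ := by rw [Complex.norm_exp]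
      have h2 : Real.exp z.re ≤ Real.exp (c - 1) :=
        Real.exp_le_exp.mpr (by simp only [hcdef]; linarith)
      have h3 := base_ineq c hc4
      simp only [F]
      linarith
    | succ n hn ih =>
      rw [Function.iterate_succ_apply', Function.iterate_succ_apply']
      set w := (E κ)^[n] z with hw
      set A := F^[n] c with hA
      have hAc : c ≤ A := iter_ge c (by linarith) n
      have hwre : w.re ≤ A - c := le_trans (Complex.re_le_norm w) ih
      have h1 : ‖E κ w‖ ≤ Real.exp w.re + ‖κ‖ := by
        calc ‖E κ w‖ ≤ ‖Complex.exp w‖ + ‖κ‖ :=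
              norm_add_le _ _
          _ = Real.exp w.re + ‖κ‖ := by rw [Complex.norm_exp]
      have h2 : Real.exp w.re ≤ Real.exp (A - c) := Real.exp_le_exp.mpr hwre
      have h3 := step_ineq c A hc4 hAc
      simp only [F, hcdef] at *
      linarith
  intro k hk
  linarith [key k hk]
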